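/- Let u ∈ S^{d−1}, 0 < θ < 1/2, and let v₁ = (t − p′)(u + θw₁), v₂ = (t − p)(u + θw₂) with p < p′ < t real numbers and ‖w₁‖, ‖w₂‖ ≤ 1. Then ‖v₁/‖v₁‖ − v₂/‖v₂‖‖ ≤ 7θ. -/

import Mathlib

lemma norm_smul_inv_sub_unit {d : ℕ} (u w : EuclideanSpace ℝ (Fin d)) (hu : ‖u‖ = 1)
    (hw : ‖w‖ ≤ 1) (θ : ℝ) (hθ0 : 0 < θ) (hθ : θ < 1/2) :
    ‖‖u + θ • w‖⁻¹ • (u + θ • w) - u‖ ≤ 2 * θ := by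
  set x := u + θ • w with hxdef
  have hxu : ‖x - u‖ ≤ θ := by
    have : x - u = θ • w := by rw [hxdef]; abel
    rw [this, norm_smul, Real.norm_eq_abs, abs_of_pos hθ0]
    nlinarith [norm_nonneg w]
  have hxn : 1 - θ ≤ ‖x‖ := by
    have h := norm_sub_norm_le u x
    have : ‖u - x‖ = ‖x - u‖ := norm_sub_rev u x
    rw [this, hu] at h
    linarith
  have hxpos : 0 < ‖x‖ := by linarith
  have h1 : ‖‖x‖⁻¹ • x - x‖ = |1 - ‖x‖| := by
    have e : ‖x‖⁻¹ • x - x = (‖x‖⁻¹ - 1) • x := by rw [sub_smul, one_smul]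
    rw [e, norm_smul, Real.norm_eq_abs, ← abs_of_pos hxpos, ← abs_mul]
    congr 1
    field_simp
    rw [abs_of_pos hxpos]; ring
  have h2 : |1 - ‖x‖| ≤ θ := by
    have h := abs_norm_sub_norm_le x u
    rw [hu] at h
    rw [abs_sub_comm]
    exact le_trans h hxu
  calc ‖‖x‖⁻¹ • x - u‖ ≤ ‖‖x‖⁻¹ • x - x‖ + ‖x - u‖ :=
        norm_sub_le_norm_sub_add_norm_sub _ _ _
    _ ≤ θ + θ := by rw [h1]; exact add_le_add h2 hxu
    _ = 2 * θ := by ring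

lemma normalize_smul_pos {d : ℕ} (c : ℝ) (hc : 0 < c) (x : EuclideanSpace ℝ (Fin d))
    (hx : x ≠ 0) : ‖c • x‖⁻¹ • (c • x) = ‖x‖⁻¹ • x := by
  rw [norm_smul, Real.norm_eq_abs, abs_of_pos hc, smul_smul]
  congr 1
  have : ‖x‖ ≠ 0 := norm_ne_zero_iff.mpr hx
  field_simp

/-- If `v₁ = (t - p')(u + θw₁)` and `v₂ = (t - p)(u + θw₂)` with `p < p' < t`,
`‖u‖ = 1`, `‖w₁‖, ‖w₂‖ ≤ 1` and `0 < θ < 1/2`, then the normalisations of `v₁` and `v₂`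
differ by at most `7θ`. -/
theorem stmt10 (d : ℕ) (u w₁ w₂ : EuclideanSpace ℝ (Fin d)) (hu : ‖u‖ = 1)
    (hw₁ : ‖w₁‖ ≤ 1) (hw₂ : ‖w₂‖ ≤ 1) (θ : ℝ) (hθ0 : 0 < θ) (hθ : θ < 1/2)
    (p p' t : ℝ) (h1 : p < p') (h2 : p' < t)
    (v₁ v₂ : EuclideanSpace ℝ (Fin d))
    (hv₁ : v₁ = (t - p') • (u + θ • w₁)) (hv₂ : v₂ = (t - p) • (u + θ • w₂)) :
    ‖‖v₁‖⁻¹ • v₁ - ‖v₂‖⁻¹ • v₂‖ ≤ 7 * θ := by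
  have hne : ∀ w : EuclideanSpace ℝ (Fin d), ‖w‖ ≤ 1 → u + θ • w ≠ 0 := by
    intro w hw h
    have : ‖u + θ • w‖ = 0 := by rw [h, norm_zero]
    have hge : 1 - θ ≤ ‖u + θ • w‖ := by
      have h0 := norm_sub_norm_le u (u + θ • w)
      have : u - (u + θ • w) = -(θ • w) := by abel
      rw [this, norm_neg, norm_smul, Real.norm_eq_abs, abs_of_pos hθ0, hu] at h0
      nlinarith [norm_nonneg w]
    linarith
  have e1 : ‖v₁‖⁻¹ • v₁ = ‖u + θ • w₁‖⁻¹ • (u + θ • w₁) := by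
    rw [hv₁]; exact normalize_smul_pos _ (by linarith) _ (hne w₁ hw₁)
  have e2 : ‖v₂‖⁻¹ • v₂ = ‖u + θ • w₂‖⁻¹ • (u + θ • w₂) := by
    rw [hv₂]; exact normalize_smul_pos _ (by linarith) _ (hne w₂ hw₂)
  rw [e1, e2]
  have b1 := norm_smul_inv_sub_unit u w₁ hu hw₁ θ hθ0 hθ
  have b2 := norm_smul_inv_sub_unit u w₂ hu hw₂ θ hθ0 hθ
  calc ‖‖u + θ • w₁‖⁻¹ • (u + θ • w₁) - ‖u + θ • w₂‖⁻¹ • (u + θ • w₂)‖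
      ≤ ‖‖u + θ • w₁‖⁻¹ • (u + θ • w₁) - u‖ + ‖u - ‖u + θ • w₂‖⁻¹ • (u + θ • w₂)‖ :=
        norm_sub_le_norm_sub_add_norm_sub _ _ _
    _ = ‖‖u + θ • w₁‖⁻¹ • (u + θ • w₁) - u‖ + ‖‖u + θ • w₂‖⁻¹ • (u + θ • w₂) - u‖ := by
        rw [norm_sub_rev u]
    _ ≤ 2 * θ + 2 * θ := add_le_add b1 b2
    _ ≤ 7 * θ := by linarith
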